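/- Corollary (IFO complexity parameter choice): In the setting of the deterministic STORM-PG convergence theorem, let ε > 0, σ > 0, C_γ > 0, B > 0 be given, and choose α = ε²·B/(6σ²) (assumed ≤ 1), η = ε·B/(2·√6·σ·C_γ) (assumed to satisfy η·L_d ≤ 1/2), and any S_0 > 0. Then 4·C_γ²·η² = α·B and 2·α·σ²/B = ε²/3; moreover, if T ≥ max( 6·(f* − f(ξ_0))/(η·ε²), 6·σ²/(S_0·α·ε²) ), then (1/T)·Σ_{t=0}^{T−1} ‖∇f(ξ_t)‖² ≤ ε². -/

import Mathlib

open Finset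

open Set in
private lemma storm_descent_lower {E : Type*} [NormedAddCommGroup E] [InnerProductSpace ℝ E]
    [CompleteSpace E]
    (f : E → ℝ) (L : ℝ) (hdiff : Differentiable ℝ f)
    (hlip : ∀ x y : E, ‖gradient f x - gradient f y‖ ≤ L * ‖x - y‖)
    (x d : E) :
    f x + inner ℝ (gradient f x) d - L / 2 * ‖d‖ ^ 2 ≤ f (x + d) := by
  set c : ℝ := inner ℝ (gradient f x) d with hc
  have hline : ∀ t : ℝ, HasDerivAt (fun s : ℝ => f (x + s • d))
      (inner ℝ (gradient f (x + t • d)) d : ℝ) t := by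
    intro t
    have h2 : HasDerivAt (fun s : ℝ => x + s • d) d t := by
      simpa using ((hasDerivAt_id t).smul_const d).const_add x
    have h1 := (hdiff (x + t • d)).hasGradientAt.hasFDerivAt
    have h3 := h1.comp_hasDerivAt t h2
    simpa [InnerProductSpace.toDual_apply_apply, Function.comp_def] using h3
  have key := image_le_of_deriv_right_le_deriv_boundary
    (f := fun t : ℝ => t * c + f x - f (x + t • d))
    (f' := fun t : ℝ => c - inner ℝ (gradient f (x + t • d)) d)
    (a := 0) (b := 1)
    (B := fun t : ℝ => L / 2 * ‖d‖ ^ 2 * t ^ 2)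
    (B' := fun t : ℝ => L * ‖d‖ ^ 2 * t)
    (by
      apply Continuous.continuousOn
      have : Continuous fun t : ℝ => f (x + t • d) :=
        hdiff.continuous.comp (by continuity)
      continuity)
    (fun t _ => (((hasDerivAt_mul_const c).add_const (f x)).sub (hline t)).hasDerivWithinAt)
    (by simp)
    (by apply Continuous.continuousOn; continuity)
    (fun t _ => by
      have h := (hasDerivAt_pow 2 t).const_mul (L / 2 * ‖d‖ ^ 2)
      have h2 : HasDerivAt (fun t : ℝ => L / 2 * ‖d‖ ^ 2 * t ^ 2) (L * ‖d‖ ^ 2 * t) t := by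
        exact h.congr_deriv (by push_cast; ring)
      exact h2.hasDerivWithinAt)
    (by
      intro t ht
      rw [← inner_sub_left]
      calc (inner ℝ (gradient f x - gradient f (x + t • d)) d : ℝ)
          ≤ ‖gradient f x - gradient f (x + t • d)‖ * ‖d‖ := real_inner_le_norm _ _
        _ ≤ (L * ‖x - (x + t • d)‖) * ‖d‖ := by
            apply mul_le_mul_of_nonneg_right (hlip _ _) (norm_nonneg d)
        _ = L * ‖d‖ ^ 2 * t := by
            have : x - (x + t • d) = -(t • d) := by abel
            rw [this, norm_neg, norm_smul, Real.norm_eq_abs, abs_of_nonneg ht.1]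
            ring)
  have h1 := key (right_mem_Icc.mpr zero_le_one)
  simp only [one_smul, one_mul, one_pow] at h1
  linarith

set_option maxHeartbeats 1000000 in
/-- Corollary (IFO complexity parameter choice) for STORM-PG. -/
theorem storm_pg_ifo_parameter_choice
    {E : Type*} [NormedAddCommGroup E] [InnerProductSpace ℝ E] [CompleteSpace E]
    (f : E → ℝ) (fstar : ℝ) (L_d : ℝ) (hL_d : 0 < L_d)
    (hdiff : Differentiable ℝ f)
    (hlip : ∀ x y : E, ‖gradient f x - gradient f y‖ ≤ L_d * ‖x - y‖)
    (hbdd : ∀ x : E, f x ≤ fstar)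
    (ε : ℝ) (hε : 0 < ε) (σ : ℝ) (hσ : 0 < σ) (C_γ : ℝ) (hC : 0 < C_γ)
    (B : ℝ) (hB : 0 < B)
    (α η : ℝ)
    (hαdef : α = ε ^ 2 * B / (6 * σ ^ 2))
    (hηdef : η = ε * B / (2 * Real.sqrt 6 * σ * C_γ))
    (hα1 : α ≤ 1) (hηL : η * L_d ≤ 1 / 2)
    (S₀ : ℝ) (hS₀ : 0 < S₀)
    (ξ g : ℕ → E) (hupd : ∀ t : ℕ, ξ (t + 1) = ξ t + η • g t)
    (T : ℕ)
    (hT : max (6 * (fstar - f (ξ 0)) / (η * ε ^ 2)) (6 * σ ^ 2 / (S₀ * α * ε ^ 2))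
      ≤ (T : ℝ))
    (hinit : ‖g 0 - gradient f (ξ 0)‖ ^ 2 ≤ σ ^ 2 / S₀)
    (hrec : ∀ t < T, ‖g (t + 1) - gradient f (ξ (t + 1))‖ ^ 2 ≤
      (1 - α) ^ 2 * ‖g t - gradient f (ξ t)‖ ^ 2
        + (2 * η ^ 2 * (1 - α) ^ 2 * C_γ ^ 2 / B) * ‖g t‖ ^ 2
        + 2 * α ^ 2 * σ ^ 2 / B) :
    4 * C_γ ^ 2 * η ^ 2 = α * B ∧
    2 * α * σ ^ 2 / B = ε ^ 2 / 3 ∧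
    (1 / (T : ℝ)) * ∑ t ∈ range T, ‖gradient f (ξ t)‖ ^ 2 ≤ ε ^ 2 := by
  have hs6 : (Real.sqrt 6) ^ 2 = 6 := Real.sq_sqrt (by norm_num)
  have hs0 : 0 < Real.sqrt 6 := Real.sqrt_pos.mpr (by norm_num)
  have hα0 : 0 < α := by rw [hαdef]; positivity
  have hη0 : 0 < η := by rw [hηdef]; positivity
  have hid1 : 4 * C_γ ^ 2 * η ^ 2 = α * B := by
    rw [hαdef, hηdef]
    field_simp
    linear_combination (-4) * hs6
  have hid2 : 2 * α * σ ^ 2 / B = ε ^ 2 / 3 := by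
    rw [hαdef]; field_simp; ring
  refine ⟨hid1, hid2, ?_⟩
  have hTpos : 0 < (T : ℝ) := by
    have h1 : (0:ℝ) < 6 * σ ^ 2 / (S₀ * α * ε ^ 2) := by positivity
    exact lt_of_lt_of_le h1 (le_trans (le_max_right _ _) hT)
  -- per-step ascent
  have hasc : ∀ t : ℕ,
      f (ξ t) + (η / 2) * ‖gradient f (ξ t)‖ ^ 2 + (η / 4) * ‖g t‖ ^ 2
        - (η / 2) * ‖g t - gradient f (ξ t)‖ ^ 2 ≤ f (ξ (t + 1)) := by
    intro t
    have hd := storm_descent_lower f L_d hdiff hlip (ξ t) (η • g t)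
    rw [← hupd t] at hd
    have hi : (inner ℝ (gradient f (ξ t)) (η • g t) : ℝ)
        = η * inner ℝ (gradient f (ξ t)) (g t) := real_inner_smul_right _ _ _
    have hnm : ‖η • g t‖ ^ 2 = η ^ 2 * ‖g t‖ ^ 2 := by
      rw [norm_smul, Real.norm_eq_abs, mul_pow, sq_abs]
    have hkey : (η / 2) * ‖g t - gradient f (ξ t)‖ ^ 2
        = (η / 2) * ‖g t‖ ^ 2 - η * inner ℝ (gradient f (ξ t)) (g t)
          + (η / 2) * ‖gradient f (ξ t)‖ ^ 2 := by
      rw [norm_sub_sq_real, real_inner_comm]; ring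
    have hcoef : L_d / 2 * η ^ 2 ≤ η / 4 := by nlinarith [hη0, hηL]
    have hGnn : (0:ℝ) ≤ ‖g t‖ ^ 2 := by positivity
    have hmul : 0 ≤ (η / 4 - L_d / 2 * η ^ 2) * ‖g t‖ ^ 2 :=
      mul_nonneg (by linarith) hGnn
    rw [hi, hnm] at hd
    linarith [hd, hkey, hmul]
  -- summed ascent
  have hsum : ∀ m : ℕ,
      f (ξ 0) + (η / 2) * ∑ t ∈ range m, ‖gradient f (ξ t)‖ ^ 2
        + (η / 4) * ∑ t ∈ range m, ‖g t‖ ^ 2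
        - (η / 2) * ∑ t ∈ range m, ‖g t - gradient f (ξ t)‖ ^ 2 ≤ f (ξ m) := by
    intro m
    induction m with
    | zero => simp
    | succ m ih =>
      rw [sum_range_succ, sum_range_succ, sum_range_succ]
      have := hasc m
      linarith
  -- error recursion with simplified constants
  have hcoef2 : 2 * η ^ 2 * (1 - α) ^ 2 * C_γ ^ 2 / B ≤ α / 2 := by
    rw [div_le_iff₀ hB]
    have h1 : (1 - α) ^ 2 ≤ 1 := by nlinarith
    have h2 : 0 ≤ η ^ 2 * C_γ ^ 2 * (1 - (1 - α) ^ 2) :=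
      mul_nonneg (mul_nonneg (sq_nonneg η) (sq_nonneg C_γ)) (by linarith)
    nlinarith [hid1, h2]
  have hc3 : 2 * α ^ 2 * σ ^ 2 / B = α * (ε ^ 2 / 3) := by
    rw [hαdef]; field_simp; ring
  have hA : (1 - α) ^ 2 ≤ 1 - α := by nlinarith
  have hstep : ∀ t < T, ‖g (t + 1) - gradient f (ξ (t + 1))‖ ^ 2
      ≤ (1 - α) * ‖g t - gradient f (ξ t)‖ ^ 2 + (α / 2) * ‖g t‖ ^ 2 + α * (ε ^ 2 / 3) := by
    intro t ht
    have hr := hrec t ht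
    have h1 : (1 - α) ^ 2 * ‖g t - gradient f (ξ t)‖ ^ 2
        ≤ (1 - α) * ‖g t - gradient f (ξ t)‖ ^ 2 :=
      mul_le_mul_of_nonneg_right hA (by positivity)
    have h2 : (2 * η ^ 2 * (1 - α) ^ 2 * C_γ ^ 2 / B) * ‖g t‖ ^ 2
        ≤ (α / 2) * ‖g t‖ ^ 2 :=
      mul_le_mul_of_nonneg_right hcoef2 (by positivity)
    linarith [hr, h1, h2, hc3]
  -- error sum bound
  have herr : ∀ m : ℕ, m ≤ T →
      ‖g m - gradient f (ξ m)‖ ^ 2 + α * ∑ t ∈ range m, ‖g t - gradient f (ξ t)‖ ^ 2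
        ≤ σ ^ 2 / S₀ + (α / 2) * ∑ t ∈ range m, ‖g t‖ ^ 2 + (m : ℝ) * (α * (ε ^ 2 / 3)) := by
    intro m
    induction m with
    | zero => intro _; simpa using hinit
    | succ m ih =>
      intro hmT
      have hm : m < T := by omega
      have ih' := ih (le_of_lt hm)
      have hs := hstep m hm
      rw [sum_range_succ, sum_range_succ]
      push_cast
      linarith [ih', hs]
  -- put it together at m = T
  have hfT := hbdd (ξ T)
  have hST := hsum T
  have heT := herr T le_rfl
  set Sn := ∑ t ∈ range T, ‖gradient f (ξ t)‖ ^ 2 with hSn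
  set SG := ∑ t ∈ range T, ‖g t‖ ^ 2 with hSG
  set Se := ∑ t ∈ range T, ‖g t - gradient f (ξ t)‖ ^ 2 with hSe
  have hSe_bound : Se ≤ σ ^ 2 / (S₀ * α) + (1 / 2) * SG + (T : ℝ) * (ε ^ 2 / 3) := by
    have heTn : (0:ℝ) ≤ ‖g T - gradient f (ξ T)‖ ^ 2 := by positivity
    have h1 : α * Se ≤ σ ^ 2 / S₀ + (α / 2) * SG + (T : ℝ) * (α * (ε ^ 2 / 3)) := by
      linarith [heT, heTn]
    have h2 : α * (σ ^ 2 / (S₀ * α) + (1 / 2) * SG + (T : ℝ) * (ε ^ 2 / 3))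
        = σ ^ 2 / S₀ + (α / 2) * SG + (T : ℝ) * (α * (ε ^ 2 / 3)) := by
      field_simp
    have h3 : α * Se ≤ α * (σ ^ 2 / (S₀ * α) + (1 / 2) * SG + (T : ℝ) * (ε ^ 2 / 3)) := by
      rw [h2]; exact h1
    exact le_of_mul_le_mul_left h3 hα0
  -- bounds from T
  have hT1 : 6 * (fstar - f (ξ 0)) / (η * ε ^ 2) ≤ (T : ℝ) :=
    le_trans (le_max_left _ _) hT
  have hT2 : 6 * σ ^ 2 / (S₀ * α * ε ^ 2) ≤ (T : ℝ) :=
    le_trans (le_max_right _ _) hT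
  have hF : fstar - f (ξ 0) ≤ (T : ℝ) * η * ε ^ 2 / 6 := by
    rw [div_le_iff₀ (by positivity : (0:ℝ) < η * ε ^ 2)] at hT1
    nlinarith [hT1]
  have hSig : σ ^ 2 / (S₀ * α) ≤ (T : ℝ) * ε ^ 2 / 6 := by
    rw [div_le_iff₀ (by positivity : (0:ℝ) < S₀ * α * ε ^ 2)] at hT2
    rw [div_le_iff₀ (by positivity : (0:ℝ) < S₀ * α)]
    nlinarith [hT2]
  -- final combination
  have hpos : (0:ℝ) ≤ η * (T : ℝ) * ε ^ 2 := by positivity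
  have hmain : (η / 2) * Sn ≤ (η / 2) * ((T : ℝ) * ε ^ 2) := by
    have h1 : (η / 2) * Se
        ≤ (η / 2) * (σ ^ 2 / (S₀ * α) + (1 / 2) * SG + (T : ℝ) * (ε ^ 2 / 3)) :=
      mul_le_mul_of_nonneg_left hSe_bound (by positivity)
    have h2 : (η / 2) * (σ ^ 2 / (S₀ * α)) ≤ (η / 2) * ((T : ℝ) * ε ^ 2 / 6) :=
      mul_le_mul_of_nonneg_left hSig (by positivity)
    linarith [hST, hfT, h1, h2, hF, hpos]
  have hSn_le : Sn ≤ (T : ℝ) * ε ^ 2 :=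
    le_of_mul_le_mul_left hmain (by positivity : (0:ℝ) < η / 2)
  rw [one_div, inv_mul_le_iff₀ hTpos]
  exact hSn_le
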